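/- arXiv:2012.02758 — 2 statements merged into one kernel-verified Lean document; each statement's English description precedes it below -/
import Mathlib

section
/- Let A = ⟨a_α : α < ω₁⟩ be a proper coherent sequence of subsets of ℕ with the ScP. If S ⊆ ω₁ is a cover (⋃_{γ∈S} â_γ = ω₁), then for every stationary S' ⊆ ω₁ there is a finite F ⊆ S such that S' ∪ F is a cover (⋃_{γ ∈ S' ∪ F} â_γ = ω₁). -/
open Set

noncomputable section

/-- The least uncountable ordinal `ω₁`. -/
def omega1 : Ordinal := (Cardinal.aleph 1).ord

/-- `⋃_{γ ∈ F} a_γ` for a finite set `F` of indices. -/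
def unionFin (a : Ordinal → Set ℕ) (F : Finset Ordinal) : Set ℕ :=
  ⋃ γ ∈ F, a γ

/-- A sequence of subsets of `ℕ`, with indices from a (downward closed) domain `D`
of ordinals, is coherent if for all `α ≤ β` in the domain there is a finite `F ⊆ α`
with `a α ∩ a β ⊆ ⋃_{γ∈F} a γ` or `a α ⊆ a β ∪ ⋃_{γ∈F} a γ`. -/
def CoherentOn (D : Set Ordinal) (a : Ordinal → Set ℕ) : Prop :=
  ∀ α β : Ordinal, α ≤ β → β ∈ D →
    ∃ F : Finset Ordinal, (∀ γ ∈ F, γ < α) ∧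
      (a α ∩ a β ⊆ unionFin a F ∨ a α ⊆ a β ∪ unionFin a F)

/-- Properness: no `a β` is contained in a finite union of earlier terms. -/
def ProperOn (D : Set Ordinal) (a : Ordinal → Set ℕ) : Prop :=
  ∀ β ∈ D, ∀ F : Finset Ordinal, (∀ γ ∈ F, γ < β) → ¬ a β ⊆ unionFin a F

/-- `â_β = { α ≤ β : a α ∖ a β ⊆ ⋃_{γ∈F} a γ for some finite F ⊆ α }`. -/
def hatA (a : Ordinal → Set ℕ) (β : Ordinal) : Set Ordinal :=
  { α | α ≤ β ∧ ∃ F : Finset Ordinal, (∀ γ ∈ F, γ < α) ∧ a α \ a β ⊆ unionFin a F }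

/-- The topology `τ(A)` on `λ + 1 = {α : α ≤ λ}` generated by the subbase
consisting of the sets `â_β` and their complements, `β < λ`. -/
def tau (lam : Ordinal) (a : Ordinal → Set ℕ) :
    TopologicalSpace {α : Ordinal // α ≤ lam} :=
  TopologicalSpace.generateFrom
    { s | ∃ β < lam, s = {x : {α : Ordinal // α ≤ lam} | x.1 ∈ hatA a β} ∨
                     s = {x : {α : Ordinal // α ≤ lam} | x.1 ∈ hatA a β}ᶜ }

/-- The subspace `ω₁ = {α : α < ω₁}` of `(ω₁+1, τ(A))`. -/
def tauSub (a : Ordinal → Set ℕ) : TopologicalSpace {y : Ordinal // y < omega1} :=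
  TopologicalSpace.induced
    (fun y : {y : Ordinal // y < omega1} => (⟨y.1, y.2.le⟩ : {α : Ordinal // α ≤ omega1}))
    (tau omega1 a)

/-- Closed unbounded subsets of `ω₁`. -/
def IsClubOmega1 (C : Set Ordinal) : Prop :=
  C ⊆ Iio omega1 ∧
  (∀ α < omega1, ∃ β ∈ C, α ≤ β) ∧
  (∀ δ, δ < omega1 → δ ≠ 0 → (∀ α < δ, ∃ β ∈ C, α < β ∧ β < δ) → δ ∈ C)

/-- Stationary subsets of `ω₁`: sets meeting every club. -/
def IsStationaryOmega1 (S : Set Ordinal) : Prop :=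
  ∀ C : Set Ordinal, IsClubOmega1 C → (S ∩ C).Nonempty

/-- The stationary covering property for a coherent sequence whose index domain is `D`:
if the sequence has length `ω₁` (i.e. `Iio ω₁ ⊆ D`), then every stationary `S ⊆ ω₁`
together with some finite `F` covers, i.e. `⋃_{γ ∈ S ∪ F} â_γ = ω₁`.  (Sequences of
length `< ω₁` have the ScP by convention.) -/
def HasScP (D : Set Ordinal) (a : Ordinal → Set ℕ) : Prop :=
  Iio omega1 ⊆ D →
    ∀ S : Set Ordinal, S ⊆ Iio omega1 → IsStationaryOmega1 S →
      ∃ F : Finset Ordinal, (⋃ γ ∈ S ∪ (↑F : Set Ordinal), hatA a γ) = Iio omega1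

/-- A node of the tree `2^{≤ω₁}`: a function `val` defined on the ordinals `< len`
(with the canonical value `false` beyond `len`). -/
structure Node where
  len : Ordinal
  val : Ordinal → Bool
  canon : ∀ α, len ≤ α → val α = false

open Classical in
/-- The restriction `x ↾ β`. -/
def Node.restrict (x : Node) (β : Ordinal) : Node where
  len := β
  val := fun α => if α < β then x.val α else false
  canon := fun α h => if_neg (not_lt.2 h)

/-- `τ.Extends σ` means `σ ⊆ τ`, i.e. `τ` extends `σ`. -/
def Node.Extends (τ σ : Node) : Prop :=
  σ.len ≤ τ.len ∧ ∀ α < σ.len, τ.val α = σ.val α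

/-- Successor ordinals. -/
def IsSucc (o : Ordinal) : Prop := ∃ β, o = β + 1

open Classical in
/-- `σ†`: if `σ` has successor length `β+1`, the node agreeing with `σ` except at `β`;
otherwise `σ` itself. -/
def Node.dagger (σ : Node) : Node :=
  if h : IsSucc σ.len then
    { len := σ.len
      val := fun α => if α = Classical.choose h then !(σ.val α) else σ.val α
      canon := by
        intro α hα
        have hs := Classical.choose_spec h
        have hne : α ≠ Classical.choose h := by
          intro he
          rw [hs, he] at hα
          rw [Ordinal.add_one_eq_succ] at hα
          exact absurd hα (not_le.2 (Order.lt_succ (Classical.choose h)))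
        show (if α = Classical.choose h then !(σ.val α) else σ.val α) = false
        rw [if_neg hne]
        exact σ.canon α hα }
  else σ

open Classical in
/-- `σ ⌢ b` : the node `σ` extended by one value `b`. -/
def Node.snoc (σ : Node) (b : Bool) : Node where
  len := σ.len + 1
  val := fun α => if α = σ.len then b else σ.val α
  canon := by
    intro α hα
    have h1 : σ.len < α := by
      have h2 : σ.len < σ.len + 1 := by
        rw [Ordinal.add_one_eq_succ]; exact Order.lt_succ σ.len
      exact lt_of_lt_of_le h2 hα
    show (if α = σ.len then b else σ.val α) = false
    rw [if_neg h1.ne']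
    exact σ.canon α h1.le

open Classical in
/-- `x ⌢ σ` : concatenation of nodes. -/
def Node.append (x σ : Node) : Node where
  len := x.len + σ.len
  val := fun α => if α < x.len then x.val α else σ.val (α - x.len)
  canon := by
    intro α hα
    have h1 : ¬ α < x.len := not_lt.2 (le_trans (le_self_add : x.len ≤ x.len + σ.len) hα)
    show (if α < x.len then x.val α else σ.val (α - x.len)) = false
    rw [if_neg h1]
    apply σ.canon
    by_contra h2
    rw [not_le] at h2
    have h3 : α ≤ x.len + (α - x.len) := Ordinal.le_add_sub α x.len
    have h4 : x.len + (α - x.len) < x.len + σ.len := (add_lt_add_iff_left x.len).2 h2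
    exact absurd hα (not_le.2 (lt_of_le_of_lt h3 h4))

/-- A subtree of `2^{<ω₁}` that is downward closed, twinned and has no maximal elements. -/
structure GoodTree (Γ : Set Node) : Prop where
  lt_omega1 : ∀ σ ∈ Γ, σ.len < omega1
  downward : ∀ σ ∈ Γ, ∀ β ≤ σ.len, σ.restrict β ∈ Γ
  twinned : ∀ σ ∈ Γ, σ.dagger ∈ Γ
  noMax : ∀ σ ∈ Γ, ∃ τ ∈ Γ, σ.len < τ.len ∧ τ.Extends σ

/-- `X(Γ)`: the maximal branches of `Γ`, i.e. the minimal elements of `2^{≤ω₁} ∖ Γ`. -/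
def XGamma (Γ : Set Node) : Set Node :=
  { x | x.len ≤ omega1 ∧ x ∉ Γ ∧ ∀ β < x.len, x.restrict β ∈ Γ }

/-- The index domain of the branch sequence `A_{Γ,x}`. -/
def branchDomain (Γ : Set Node) (x : Node) : Set Ordinal :=
  { α | α + 1 ≤ x.len ∧ x.restrict (α + 1) ∈ Γ }

/-- The branch sequence `A_{Γ,x}`, `a^x_α = a_{x ↾ (α+1)}`. -/
def branchSeq (a : Node → Set ℕ) (x : Node) : Ordinal → Set ℕ :=
  fun α => a (x.restrict (α + 1))

/-- A `𝕋`-algebra on the tree `Γ`. -/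
structure IsTAlgebra (Γ : Set Node) (a : Node → Set ℕ) : Prop where
  tree : GoodTree Γ
  empty_of_not_succ : ∀ σ ∈ Γ, ¬ IsSucc σ.len → a σ = ∅
  compl_dagger : ∀ σ ∈ Γ, IsSucc σ.len → a σ.dagger = (a σ)ᶜ
  branch_coherent : ∀ x : Node, x.len ≤ omega1 →
    CoherentOn (branchDomain Γ x) (branchSeq a x)
  branch_proper : ∀ x : Node, x.len ≤ omega1 →
    ProperOn (branchDomain Γ x) (branchSeq a x)

/-- The Boolean subalgebra of `P(ℕ)` generated by a family `G`. -/
inductive GenBool (G : Set (Set ℕ)) : Set ℕ → Prop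
  | basic (s : Set ℕ) : s ∈ G → GenBool G s
  | empty : GenBool G ∅
  | compl (s : Set ℕ) : GenBool G s → GenBool G sᶜ
  | inter (s t : Set ℕ) : GenBool G s → GenBool G t → GenBool G (s ∩ t)

/-- `B_Γ`: the Boolean subalgebra of `P(ℕ)` generated by `{a_σ : σ ∈ Γ}`. -/
def BGamma (Γ : Set Node) (a : Node → Set ℕ) : Set (Set ℕ) :=
  { b | GenBool { s | ∃ σ ∈ Γ, s = a σ } b }

/-- A finite intersection from the family `{ℕ ∖ a_{x↾(α+1)} : α + 1 ≤ λ_x}`. -/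
def finInterCompl (a : Node → Set ℕ) (x : Node) (F : Finset Ordinal) : Set ℕ :=
  ⋂ α ∈ F, (a (x.restrict (α + 1)))ᶜ

/-- The ultrafilter `U_x` on `B_Γ` generated by the finite intersections of
`{ℕ ∖ a_{x↾(α+1)} : α + 1 ≤ λ_x}`. -/
def Ux (Γ : Set Node) (a : Node → Set ℕ) (x : Node) : Set (Set ℕ) :=
  { b | b ∈ BGamma Γ a ∧
    ∃ F : Finset Ordinal, (∀ α ∈ F, α + 1 ≤ x.len) ∧ finInterCompl a x F ⊆ b }

/-- The Stone topology on `X(Γ)`, with subbasic open sets `{z : b ∈ U_z}`, `b ∈ B_Γ`. -/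
def stoneTop (Γ : Set Node) (a : Node → Set ℕ) :
    TopologicalSpace {z : Node // z ∈ XGamma Γ} :=
  TopologicalSpace.generateFrom
    { s | ∃ b ∈ BGamma Γ a, s = { z : {z : Node // z ∈ XGamma Γ} | b ∈ Ux Γ a z.1 } }

/-- An ultrafilter on a Boolean subalgebra `B` of `P(ℕ)`. -/
def IsUltrafilterOn (B U : Set (Set ℕ)) : Prop :=
  U ⊆ B ∧
  (∀ s ∈ U, ∀ t ∈ U, s ∩ t ∈ U) ∧
  (∀ s ∈ U, ∀ t ∈ B, s ⊆ t → t ∈ U) ∧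
  ∅ ∉ U ∧
  (∀ b ∈ B, Xor' (b ∈ U) (bᶜ ∈ U))

/-- The length-lexicographic (strict) order on finite binary strings. -/
def LenLexLT (σ τ : Node) : Prop :=
  σ.len < τ.len ∨ (σ.len = τ.len ∧ ∃ i < σ.len, σ.val i = false ∧ τ.val i = true ∧
    ∀ j < i, σ.val j = τ.val j)

/-- `e` is the standard length-lexicographic enumeration of `2^{<ω}`. -/
def IsStdEnum (e : ℕ → Node) : Prop :=
  (∀ k, (e k).len < Ordinal.omega0) ∧
  (∀ σ : Node, σ.len < Ordinal.omega0 → ∃ k, e k = σ) ∧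
  (∀ k l : ℕ, k < l → LenLexLT (e k) (e l))

/-- `⋃_{k<n} c^x_k` where `c^x_n = a^x_{e(n)} ∖ ⋃_{k<n} c^x_k` (recursively). -/
def cUnion (a : Node → Set ℕ) (x : Node) (eb : ℕ → Ordinal) : ℕ → Set ℕ
  | 0 => ∅
  | n + 1 => cUnion a x eb n ∪ (a (x.restrict (eb n + 1)) \ cUnion a x eb n)

/-- `c^x_n = a^x_{e(n)} ∖ ⋃_{k<n} c^x_k`. -/
def cSeq (a : Node → Set ℕ) (x : Node) (eb : ℕ → Ordinal) (n : ℕ) : Set ℕ :=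
  a (x.restrict (eb n + 1)) \ cUnion a x eb n

/-- `{x ⌢ σ : σ ∈ 2^{<ω}}`. -/
def appendSet (x : Node) : Set Node :=
  { τ | ∃ σ : Node, σ.len < Ordinal.omega0 ∧ τ = x.append σ }

/-- The defining equations of the extension `A_Γ[π,x]`:
`a_x = ∅`, `a_{x⌢(σ⌢0)} = ⋃{c^x_k : σ⌢1 ⊆ σ_{π(k)}}`, `a_{x⌢(σ⌢1)} = ℕ ∖ a_{x⌢(σ⌢0)}`. -/
def ExtEquations (e : ℕ → Node) (π : ℕ → ℕ) (a : Node → Set ℕ) (x : Node)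
    (eb : ℕ → Ordinal) (a' : Node → Set ℕ) : Prop :=
  a' x = ∅ ∧
  ∀ σ : Node, σ.len < Ordinal.omega0 →
    (a' (x.append (σ.snoc false)) =
      ⋃ k ∈ { k : ℕ | (e (π k)).Extends (σ.snoc true) }, cSeq a x eb k) ∧
    (a' (x.append (σ.snoc true)) = (a' (x.append (σ.snoc false)))ᶜ)

/-- The full tree `2^{<ω₁}`. -/
def GammaFull : Set Node := { σ | σ.len < omega1 }

theorem natLtOmega1 (n : ℕ) : (n : Ordinal) < omega1 := by
  have h1 : (n : Ordinal) < Ordinal.omega0 := Ordinal.nat_lt_omega0 n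
  have h2 : Ordinal.omega0 < omega1 := by
    rw [omega1, ← Cardinal.ord_aleph0]
    exact Cardinal.ord_lt_ord.2 (by rw [← Cardinal.aleph_zero]
                                    exact Cardinal.aleph_lt_aleph.2 zero_lt_one)
  exact h1.trans h2


lemma mem_unionFin {a : Ordinal → Set ℕ} {F : Finset Ordinal} {x : ℕ} :
    x ∈ unionFin a F ↔ ∃ γ ∈ F, x ∈ a γ := by simp [unionFin]

lemma hatA_self (a : Ordinal → Set ℕ) (γ : Ordinal) : γ ∈ hatA a γ :=
  ⟨le_refl γ, ∅, by simp, by simp [unionFin]⟩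

/-- Key lemma: if `S` is a cover then each `hatA a γ`, `γ < ω₁`, is covered by
finitely many `hatA a δ`, `δ ∈ S`. -/
lemma lemR (a : Ordinal → Set ℕ)
    (hcoh : CoherentOn (Iio omega1) a)
    (S : Set Ordinal)
    (hcover : (⋃ γ ∈ S, hatA a γ) = Iio omega1) :
    ∀ γ, γ < omega1 → ∃ F : Finset Ordinal, (↑F : Set Ordinal) ⊆ S ∧
      hatA a γ ⊆ ⋃ δ ∈ (↑F : Set Ordinal), hatA a δ := by
  intro γ
  induction γ using Ordinal.induction with
  | h γ IH =>
    intro hγ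
    have hmem : γ ∈ ⋃ δ ∈ S, hatA a δ := by rw [hcover]; exact hγ
    obtain ⟨δ₀, hδ₀S, hγδ₀⟩ := Set.mem_iUnion₂.1 hmem
    obtain ⟨hγle, K, hKlt, hKsub⟩ := hγδ₀
    have hIH : ∀ κ : Ordinal, ∃ F : Finset Ordinal, (↑F : Set Ordinal) ⊆ S ∧
        (κ ∈ K → hatA a κ ⊆ ⋃ δ ∈ (↑F : Set Ordinal), hatA a δ) := by
      intro κ
      by_cases h : κ ∈ K
      · obtain ⟨F, h1, h2⟩ := IH κ (hKlt κ h) ((hKlt κ h).trans hγ)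
        exact ⟨F, h1, fun _ => h2⟩
      · exact ⟨∅, by simp, fun h' => absurd h' h⟩
    choose g hgS hgcov using hIH
    refine ⟨insert δ₀ (K.biUnion g), ?_, ?_⟩
    · intro x hx
      rw [Finset.coe_insert, Set.mem_insert_iff] at hx
      rcases hx with rfl | hx
      · exact hδ₀S
      · rw [Finset.mem_coe, Finset.mem_biUnion] at hx
        obtain ⟨κ, hκK, hxg⟩ := hx
        exact hgS κ (Finset.mem_coe.2 hxg)
    · intro α hα
      obtain ⟨hαγ, F₁, hF₁lt, hF₁sub⟩ := hα
      by_cases hcase : ∃ κ ∈ K, α ∈ hatA a κ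
      · obtain ⟨κ, hκK, hακ⟩ := hcase
        obtain ⟨δ, hδ, hαδ⟩ := Set.mem_iUnion₂.1 (hgcov κ hκK hακ)
        refine Set.mem_iUnion₂.2 ⟨δ, ?_, hαδ⟩
        rw [Finset.mem_coe] at hδ ⊢
        exact Finset.mem_insert_of_mem (Finset.mem_biUnion.2 ⟨κ, hκK, hδ⟩)
      · push_neg at hcase
        have h2 : ∀ κ : Ordinal, ∃ F₂ : Finset Ordinal, (∀ γ' ∈ F₂, γ' < α) ∧
            ((κ ∈ K ∧ α ≤ κ) → a α ∩ a κ ⊆ unionFin a F₂) := by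
          intro κ
          by_cases h : κ ∈ K ∧ α ≤ κ
          · have hκω : κ ∈ Iio omega1 := Set.mem_Iio.2 ((hKlt κ h.1).trans hγ)
            obtain ⟨F₂, hlt, hor⟩ := hcoh α κ h.2 hκω
            rcases hor with h1 | h1
            · exact ⟨F₂, hlt, fun _ => h1⟩
            · exact absurd ⟨h.2, F₂, hlt, fun x hx =>
                (h1 hx.1).resolve_left hx.2⟩ (hcase κ h.1)
          · exact ⟨∅, by simp, fun h' => absurd h' h⟩
        choose g₂ hg₂lt hg₂sub using h2
        have hδ₀mem : δ₀ ∈ (↑(insert δ₀ (K.biUnion g)) : Set Ordinal) :=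
          Finset.mem_coe.2 (Finset.mem_insert_self _ _)
        refine Set.mem_iUnion₂.2 ⟨δ₀, hδ₀mem, hαγ.trans hγle,
          F₁ ∪ K.filter (· < α) ∪ K.biUnion g₂, ?_, ?_⟩
        · intro γ' hγ'
          rcases Finset.mem_union.1 hγ' with h' | h'
          · rcases Finset.mem_union.1 h' with h'' | h''
            · exact hF₁lt γ' h''
            · exact (Finset.mem_filter.1 h'').2
          · obtain ⟨κ, hκK, hγ'g⟩ := Finset.mem_biUnion.1 h'
            exact hg₂lt κ γ' hγ'g
        · intro x hx
          obtain ⟨hxa, hxd⟩ := hx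
          rw [mem_unionFin]
          by_cases hxγ : x ∈ a γ
          · have hxK : x ∈ unionFin a K := hKsub ⟨hxγ, hxd⟩
            obtain ⟨κ, hκK, hxκ⟩ := mem_unionFin.1 hxK
            by_cases hκα : κ < α
            · exact ⟨κ, Finset.mem_union_left _ (Finset.mem_union_right _
                (Finset.mem_filter.2 ⟨hκK, hκα⟩)), hxκ⟩
            · have hin : x ∈ unionFin a (g₂ κ) :=
                hg₂sub κ ⟨hκK, not_lt.1 hκα⟩ ⟨hxa, hxκ⟩
              obtain ⟨γ', hγ'g, hxγ'⟩ := mem_unionFin.1 hin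
              exact ⟨γ', Finset.mem_union_right _
                (Finset.mem_biUnion.2 ⟨κ, hκK, hγ'g⟩), hxγ'⟩
          · obtain ⟨γ', hγ', hxγ'⟩ := mem_unionFin.1 (hF₁sub ⟨hxa, hxγ⟩)
            exact ⟨γ', Finset.mem_union_left _ (Finset.mem_union_left _ hγ'), hxγ'⟩

/-- For a proper coherent `ω₁`-sequence with the ScP: if `S ⊆ ω₁` is a cover, then
for every stationary `S' ⊆ ω₁` there is a finite `F ⊆ S` such that `S' ∪ F` is a
cover. -/
theorem stmt10 (a : Ordinal → Set ℕ)
    (hcoh : CoherentOn (Iio omega1) a) (hprop : ProperOn (Iio omega1) a)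
    (hScP : HasScP (Iio omega1) a)
    (S : Set Ordinal) (hS : S ⊆ Iio omega1)
    (hcover : (⋃ γ ∈ S, hatA a γ) = Iio omega1)
    (S' : Set Ordinal) (hS' : S' ⊆ Iio omega1) (hstat : IsStationaryOmega1 S') :
    ∃ F : Finset Ordinal, (↑F : Set Ordinal) ⊆ S ∧
      (⋃ γ ∈ S' ∪ (↑F : Set Ordinal), hatA a γ) = Iio omega1 := by
  obtain ⟨F₀, hF₀⟩ := hScP (fun x hx => hx) S' hS' hstat
  -- every γ ∈ F₀ is < ω₁ since γ ∈ hatA a γ ⊆ the union = Iio ω₁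
  have hF₀lt : ∀ γ ∈ F₀, γ < omega1 := by
    intro γ hγ
    have : γ ∈ ⋃ β ∈ S' ∪ (↑F₀ : Set Ordinal), hatA a β :=
      Set.mem_iUnion₂.2 ⟨γ, Or.inr (Finset.mem_coe.2 hγ), hatA_self a γ⟩
    rw [hF₀] at this
    exact this
  have hIH : ∀ γ : Ordinal, ∃ F : Finset Ordinal, (↑F : Set Ordinal) ⊆ S ∧
      (γ ∈ F₀ → hatA a γ ⊆ ⋃ δ ∈ (↑F : Set Ordinal), hatA a δ) := by
    intro γ
    by_cases h : γ ∈ F₀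
    · obtain ⟨F, h1, h2⟩ := lemR a hcoh S hcover γ (hF₀lt γ h)
      exact ⟨F, h1, fun _ => h2⟩
    · exact ⟨∅, by simp, fun h' => absurd h' h⟩
  choose g hgS hgcov using hIH
  refine ⟨F₀.biUnion g, ?_, ?_⟩
  · intro x hx
    rw [Finset.mem_coe, Finset.mem_biUnion] at hx
    obtain ⟨γ, hγ, hxg⟩ := hx
    exact hgS γ (Finset.mem_coe.2 hxg)
  · apply Set.Subset.antisymm
    · intro α hα
      obtain ⟨γ, hγ, hαγ⟩ := Set.mem_iUnion₂.1 hα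
      have hγω : γ < omega1 := by
        rcases hγ with h | h
        · exact hS' h
        · rw [Finset.mem_coe, Finset.mem_biUnion] at h
          obtain ⟨γ', hγ', hg⟩ := h
          exact hS (hgS γ' (Finset.mem_coe.2 hg))
      exact Set.mem_Iio.2 (lt_of_le_of_lt hαγ.1 hγω)
    · intro α hα
      have : α ∈ ⋃ β ∈ S' ∪ (↑F₀ : Set Ordinal), hatA a β := by rw [hF₀]; exact hα
      obtain ⟨γ, hγ, hαγ⟩ := Set.mem_iUnion₂.1 this
      rcases hγ with h | h
      · exact Set.mem_iUnion₂.2 ⟨γ, Or.inl h, hαγ⟩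
      · rw [Finset.mem_coe] at h
        obtain ⟨δ, hδ, hαδ⟩ := Set.mem_iUnion₂.1 (hgcov γ h hαγ)
        refine Set.mem_iUnion₂.2 ⟨δ, Or.inr ?_, hαδ⟩
        rw [Finset.mem_coe] at hδ ⊢
        exact Finset.mem_biUnion.2 ⟨γ, h, hδ⟩

end
end

section
/- If A = ⟨a_α : α < ω₁⟩ is a proper coherent sequence of subsets of ℕ, then every point α < ω₁ of the space (ω₁+1, τ(A)) has a countable neighborhood base; in particular the subspace ω₁ of (ω₁+1, τ(A)) is first countable. -/
open Set

noncomputable section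

section AuxStmt15

/-- Single-step covering: if `x ∉ â_γ` (when relevant), then `a x ∩ a γ` is covered
by a finite union of `a η`, `η < x`. -/
theorem aux_single_cover (a : Ordinal → Set ℕ)
    (hcoh : CoherentOn (Iio omega1) a) {x γ : Ordinal} (hγ : γ < omega1)
    (hnot : x ≤ γ → x ∉ hatA a γ) :
    ∃ H : Finset Ordinal, (∀ η ∈ H, η < x) ∧ a x ∩ a γ ⊆ unionFin a H := by
  rcases le_or_gt x γ with hle | hlt
  · obtain ⟨F, hF, hc⟩ := hcoh x γ hle hγ
    refine ⟨F, hF, ?_⟩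
    rcases hc with h | h
    · exact h
    · exfalso
      apply hnot hle
      refine ⟨hle, F, hF, ?_⟩
      rintro n ⟨hn1, hn2⟩
      rcases h hn1 with h' | h'
      · exact absurd h' hn2
      · exact h'
  · refine ⟨{γ}, by simpa using hlt, ?_⟩
    rintro n ⟨-, hn⟩
    simp only [unionFin, Finset.mem_singleton, iUnion_iUnion_eq_left]
    exact hn

/-- Covering lemma: a finite union version of `aux_single_cover`. -/
theorem aux_cover (a : Ordinal → Set ℕ)
    (hcoh : CoherentOn (Iio omega1) a) {x : Ordinal}
    (G : Finset Ordinal) (hG : ∀ γ ∈ G, γ < omega1)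
    (hnot : ∀ γ ∈ G, x ≤ γ → x ∉ hatA a γ) :
    ∃ H : Finset Ordinal, (∀ η ∈ H, η < x) ∧ a x ∩ unionFin a G ⊆ unionFin a H := by
  classical
  induction G using Finset.induction_on with
  | empty => exact ⟨∅, by simp, by simp [unionFin]⟩
  | insert γ G hγG ih =>
    obtain ⟨H1, hH1, hc1⟩ := ih (fun η hη => hG η (Finset.mem_insert_of_mem hη))
      (fun η hη => hnot η (Finset.mem_insert_of_mem hη))
    obtain ⟨H2, hH2, hc2⟩ := aux_single_cover a hcoh
      (hG γ (Finset.mem_insert_self γ G)) (hnot γ (Finset.mem_insert_self γ G))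
    refine ⟨H1 ∪ H2, ?_, ?_⟩
    · intro η hη
      rcases Finset.mem_union.1 hη with h | h
      · exact hH1 η h
      · exact hH2 η h
    · rintro n ⟨hnx, hnG⟩
      have : n ∈ a γ ∨ n ∈ unionFin a G := by
        simpa [unionFin, Finset.mem_insert, or_and_right, exists_or,
          iUnion_iUnion_eq_left] using hnG
      have hmem : n ∈ unionFin a H1 ∨ n ∈ unionFin a H2 := by
        rcases this with h | h
        · exact Or.inr (hc2 ⟨hnx, h⟩)
        · exact Or.inl (hc1 ⟨hnx, h⟩)
      rcases hmem with h | h <;>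
        · simp only [unionFin, mem_iUnion, Finset.mem_union] at h ⊢
          obtain ⟨η, hη, hmem⟩ := h
          exact ⟨η, by tauto, hmem⟩

/-- Lemma A: if `α ∈ â_β` with witness `G` and `x ∈ â_α` avoids all `â_γ`, `γ ∈ G`,
then `x ∈ â_β`. -/
theorem aux_lemmaA (a : Ordinal → Set ℕ)
    (hcoh : CoherentOn (Iio omega1) a) {x α β : Ordinal} (hβ : β < omega1) (hαβ : α ≤ β)
    (G : Finset Ordinal) (hGα : ∀ γ ∈ G, γ < α) (hGcov : a α \ a β ⊆ unionFin a G)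
    (hxα : x ∈ hatA a α) (hxG : ∀ γ ∈ G, x ∉ hatA a γ) : x ∈ hatA a β := by
  classical
  obtain ⟨hxle, F1, hF1, hc1⟩ := hxα
  obtain ⟨H, hH, hHcov⟩ := aux_cover a hcoh G
    (fun γ hγ => ((hGα γ hγ).trans_le hαβ).trans hβ) (fun γ hγ _ => hxG γ hγ)
  refine ⟨hxle.trans hαβ, F1 ∪ H, ?_, ?_⟩
  · intro η hη
    rcases Finset.mem_union.1 hη with h | h
    · exact hF1 η h
    · exact hH η h
  · rintro n ⟨hnx, hnβ⟩
    have : n ∈ unionFin a F1 ∨ n ∈ unionFin a H := by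
      by_cases hα : n ∈ a α
      · exact Or.inr (hHcov ⟨hnx, hGcov ⟨hα, hnβ⟩⟩)
      · exact Or.inl (hc1 ⟨hnx, hα⟩)
    rcases this with h | h <;>
      · simp only [unionFin, mem_iUnion, Finset.mem_union] at h ⊢
        obtain ⟨η, hη, hmem⟩ := h
        exact ⟨η, by tauto, hmem⟩

/-- Lemma B: if `a α ∩ a δ` is covered by `⋃_{γ ∈ F} a γ` with `F ⊆ α`, then no
`x ∈ â_α ∩ â_δ` can avoid all `â_γ`, `γ ∈ F`. -/
theorem aux_lemmaB (a : Ordinal → Set ℕ)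
    (hcoh : CoherentOn (Iio omega1) a) (hprop : ProperOn (Iio omega1) a)
    {α δ x : Ordinal} (hδ : δ < omega1) (hαδ : α ≤ δ)
    (F : Finset Ordinal) (hFcov : a α ∩ a δ ⊆ unionFin a F)
    (hxα : x ∈ hatA a α) (hxδ : x ∈ hatA a δ) (hxF : ∀ γ ∈ F, x ∉ hatA a γ)
    (hFω : ∀ γ ∈ F, γ < omega1) : False := by
  classical
  obtain ⟨hxle, F1, hF1, hc1⟩ := hxα
  obtain ⟨-, F2, hF2, hc2⟩ := hxδ
  have hx : x < omega1 := (hxle.trans hαδ).trans_lt hδ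
  obtain ⟨H, hH, hHcov⟩ := aux_cover a hcoh F hFω (fun γ hγ _ => hxF γ hγ)
  apply hprop x hx (F1 ∪ F2 ∪ H)
  · intro η hη
    rcases Finset.mem_union.1 hη with h | h
    · rcases Finset.mem_union.1 h with h' | h'
      · exact hF1 η h'
      · exact hF2 η h'
    · exact hH η h
  · intro n hnx
    have : n ∈ unionFin a F1 ∨ n ∈ unionFin a F2 ∨ n ∈ unionFin a H := by
      by_cases hα : n ∈ a α
      · by_cases hδ' : n ∈ a δ
        · exact Or.inr (Or.inr (hHcov ⟨hnx, hFcov ⟨hα, hδ'⟩⟩))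
        · exact Or.inr (Or.inl (hc2 ⟨hnx, hδ'⟩))
      · exact Or.inl (hc1 ⟨hnx, hα⟩)
    rcases this with h | h | h <;>
      · simp only [unionFin, mem_iUnion, Finset.mem_union] at h ⊢
        obtain ⟨η, hη, hmem⟩ := h
        exact ⟨η, by tauto, hmem⟩

theorem aux_self_mem_hatA (a : Ordinal → Set ℕ) (β : Ordinal) : β ∈ hatA a β :=
  ⟨le_rfl, ∅, by simp, by simp⟩

theorem aux_countable_Iio {α : Ordinal} (h : α < omega1) : (Set.Iio α).Countable := by
  rw [Cardinal.countable_iff_lt_aleph_one, Ordinal.mk_Iio_ordinal]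
  have h1 : α.card < Cardinal.aleph 1 := Cardinal.lt_ord.1 h
  calc Cardinal.lift α.card < Cardinal.lift (Cardinal.aleph 1) := Cardinal.lift_lt.2 h1
    _ = Cardinal.aleph 1 := by rw [Cardinal.lift_aleph, Ordinal.lift_one]

end AuxStmt15

/-- For a proper coherent `ω₁`-sequence `A`, every point `α < ω₁` of
`(ω₁+1, τ(A))` has a countable neighborhood base; in particular the subspace `ω₁`
of `(ω₁+1, τ(A))` is first countable. -/
theorem stmt15 (a : Ordinal → Set ℕ)
    (hcoh : CoherentOn (Iio omega1) a) (hprop : ProperOn (Iio omega1) a) :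
    (∀ y : {α : Ordinal // α ≤ omega1}, y.1 < omega1 →
      ∃ 𝓑 : Set (Set {α : Ordinal // α ≤ omega1}), 𝓑.Countable ∧
        (∀ U ∈ 𝓑, @IsOpen _ (tau omega1 a) U ∧ y ∈ U) ∧
        (∀ V : Set {α : Ordinal // α ≤ omega1},
          @IsOpen _ (tau omega1 a) V → y ∈ V → ∃ U ∈ 𝓑, U ⊆ V)) ∧
    @FirstCountableTopology {y : Ordinal // y < omega1} (tauSub a) := by
  classical
  -- the subbasis
  set sub : Set (Set {α : Ordinal // α ≤ omega1}) :=
    { s | ∃ β < omega1, s = {x : {α : Ordinal // α ≤ omega1} | x.1 ∈ hatA a β} ∨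
                     s = {x : {α : Ordinal // α ≤ omega1} | x.1 ∈ hatA a β}ᶜ } with hsubdef
  have htau : tau omega1 a = TopologicalSpace.generateFrom sub := rfl
  have part1 : ∀ y : {α : Ordinal // α ≤ omega1}, y.1 < omega1 →
      ∃ 𝓑 : Set (Set {α : Ordinal // α ≤ omega1}), 𝓑.Countable ∧
        (∀ U ∈ 𝓑, @IsOpen _ (tau omega1 a) U ∧ y ∈ U) ∧
        (∀ V : Set {α : Ordinal // α ≤ omega1},
          @IsOpen _ (tau omega1 a) V → y ∈ V → ∃ U ∈ 𝓑, U ⊆ V) := by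
    intro y hy
    set bas : Finset Ordinal → Set {α : Ordinal // α ≤ omega1} :=
      fun F => {x | x.1 ∈ hatA a y.1 ∧ ∀ γ ∈ F, x.1 ∉ hatA a γ} with hbasdef
    refine ⟨bas '' {F : Finset Ordinal | ∀ γ ∈ F, γ < y.1}, ?_, ?_, ?_⟩
    · -- countability
      apply Set.Countable.image
      have h1 : {t : Set Ordinal | t.Finite ∧ t ⊆ Set.Iio y.1}.Countable :=
        Set.countable_setOf_finite_subset (aux_countable_Iio hy)
      have h2 : {F : Finset Ordinal | ∀ γ ∈ F, γ < y.1} =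
          (fun F : Finset Ordinal => (↑F : Set Ordinal)) ⁻¹'
            {t : Set Ordinal | t.Finite ∧ t ⊆ Set.Iio y.1} := by
        ext F
        simp [Set.subset_def]
      rw [h2]
      exact h1.preimage Finset.coe_injective
    · -- openness and membership
      rintro U ⟨F, hF, rfl⟩
      constructor
      · -- open
        have : ∀ G : Finset Ordinal, (∀ γ ∈ G, γ < omega1) →
            TopologicalSpace.GenerateOpen sub (bas G) := by
          intro G
          induction G using Finset.induction_on with
          | empty =>
            intro _
            have : bas ∅ = {x : {α : Ordinal // α ≤ omega1} | x.1 ∈ hatA a y.1} := by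
              ext x; simp [hbasdef]
            rw [this]
            exact TopologicalSpace.GenerateOpen.basic _ ⟨y.1, hy, Or.inl rfl⟩
          | insert γ G hγG ih =>
            intro hall
            have heq : bas (insert γ G) =
                ({x : {α : Ordinal // α ≤ omega1} | x.1 ∈ hatA a γ})ᶜ ∩ bas G := by
              ext x
              simp only [hbasdef, mem_setOf_eq, mem_inter_iff, mem_compl_iff,
                Finset.mem_insert]
              constructor
              · rintro ⟨h1, h2⟩
                exact ⟨h2 γ (Or.inl rfl), h1, fun η hη => h2 η (Or.inr hη)⟩
              · rintro ⟨h0, h1, h2⟩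
                refine ⟨h1, ?_⟩
                rintro η (rfl | hη)
                · exact h0
                · exact h2 η hη
            rw [heq]
            refine TopologicalSpace.GenerateOpen.inter _ _ ?_
              (ih (fun η hη => hall η (Finset.mem_insert_of_mem hη)))
            exact TopologicalSpace.GenerateOpen.basic _
              ⟨γ, hall γ (Finset.mem_insert_self γ G), Or.inr rfl⟩
        exact this F (fun γ hγ => (hF γ hγ).trans hy)
      · -- y ∈ bas F
        refine ⟨aux_self_mem_hatA a y.1, ?_⟩
        intro γ hγ hmem
        exact absurd hmem.1 (not_le.2 (hF γ hγ))
    · -- base property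
      intro V hV hyV
      have hV' : TopologicalSpace.GenerateOpen sub V := hV
      have key : ∀ W, TopologicalSpace.GenerateOpen sub W → y ∈ W →
          ∃ F : Finset Ordinal, (∀ γ ∈ F, γ < y.1) ∧ bas F ⊆ W := by
        intro W hW
        induction hW with
        | basic s hs =>
          intro hys
          obtain ⟨β, hβ, hcase⟩ := hs
          rcases hcase with rfl | rfl
          · have hmem : y.1 ∈ hatA a β := hys
            obtain ⟨hle, G, hG, hGcov⟩ := hmem
            refine ⟨G, hG, ?_⟩
            intro x hx
            exact aux_lemmaA a hcoh hβ hle G hG hGcov hx.1 hx.2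
          · have hnot : y.1 ∉ hatA a β := hys
            rcases lt_or_ge β y.1 with hb | hb
            · refine ⟨{β}, by simpa using hb, ?_⟩
              intro x hx hmem
              exact hx.2 β (Finset.mem_singleton_self β) hmem
            · obtain ⟨F, hF, hFcov⟩ := aux_single_cover a hcoh hβ (fun _ => hnot)
              refine ⟨F, hF, ?_⟩
              intro x hx hmem
              exact aux_lemmaB a hcoh hprop hβ hb F hFcov hx.1 hmem hx.2
                (fun γ hγ => ((hF γ hγ).trans_le hb).trans hβ)
        | univ => exact fun _ => ⟨∅, by simp, subset_univ _⟩
        | inter s t _ _ ihs iht =>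
          intro hyst
          obtain ⟨F1, h1, hs1⟩ := ihs hyst.1
          obtain ⟨F2, h2, hs2⟩ := iht hyst.2
          refine ⟨F1 ∪ F2, ?_, ?_⟩
          · intro γ hγ
            rcases Finset.mem_union.1 hγ with h | h
            · exact h1 γ h
            · exact h2 γ h
          · intro x hx
            refine ⟨hs1 ⟨hx.1, fun γ hγ => hx.2 γ (Finset.mem_union_left _ hγ)⟩,
              hs2 ⟨hx.1, fun γ hγ => hx.2 γ (Finset.mem_union_right _ hγ)⟩⟩
        | sUnion S _ ih =>
          intro hyS
          obtain ⟨s, hsS, hys⟩ := hyS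
          obtain ⟨F, hF, hsub⟩ := ih s hsS hys
          exact ⟨F, hF, hsub.trans (subset_sUnion_of_mem hsS)⟩
      obtain ⟨F, hF, hsub⟩ := key V hV' hyV
      exact ⟨bas F, ⟨F, hF, rfl⟩, hsub⟩
  refine ⟨part1, ?_⟩
  -- second part : first countability of the subspace
  letI tTop : TopologicalSpace {α : Ordinal // α ≤ omega1} := tau omega1 a
  letI tSub : TopologicalSpace {y : Ordinal // y < omega1} := tauSub a
  refine ⟨fun z => ?_⟩
  set f : {y : Ordinal // y < omega1} → {α : Ordinal // α ≤ omega1} :=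
    fun y => ⟨y.1, y.2.le⟩ with hfdef
  obtain ⟨𝓑, hcnt, hmem, hbase⟩ := part1 (f z) z.2
  have hbasis : (@nhds _ tTop (f z)).HasBasis (· ∈ 𝓑) id := by
    constructor
    intro t
    constructor
    · intro ht
      obtain ⟨V, hVt, hVopen, hyV⟩ := mem_nhds_iff.1 ht
      obtain ⟨U, hU𝓑, hUV⟩ := hbase V hVopen hyV
      exact ⟨U, hU𝓑, hUV.trans hVt⟩
    · rintro ⟨U, hU𝓑, hUt⟩
      have := hmem U hU𝓑
      exact Filter.mem_of_superset (this.1.mem_nhds this.2) hUt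
  have hcg : (@nhds _ tTop (f z)).IsCountablyGenerated :=
    Filter.HasCountableBasis.isCountablyGenerated ⟨hbasis, hcnt⟩
  have heq : @nhds _ tSub z = Filter.comap f (@nhds _ tTop (f z)) :=
    nhds_induced f z
  rw [heq]
  haveI := hcg
  exact Filter.comap.isCountablyGenerated _ _

end
end
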